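/- Consider the composite problem minimize φ = f + g under the standing assumptions, and let the iterates be generated by adaPGM. Then for every k ≥ 1 and every x* ∈ argmin φ, with U_k = ½‖x^k − x*‖² + ¼‖x^k − x^{k-1}‖² + γ_k(1 + ρ_k)P_{k-1}: U_{k+1} ≤ U_k − (¼ − ρ_{k+1}²δ_k)‖x^{k-1} − x^k‖² − γ_k(1 + ρ_k − ρ_{k+1}²)P_{k-1}, and moreover ¼ − ρ_{k+1}²δ_k ≥ 0 and 1 + ρ_k − ρ_{k+1}² ≥ 0. -/

import Mathlib

open scoped RealInnerProductSpace
open Filter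

noncomputable section

/-- Euclidean space `ℝⁿ`. -/
abbrev En (n : ℕ) := EuclideanSpace ℝ (Fin n)

/-- Local Lipschitz-type estimate `ℓ = ⟨∇f(a) − ∇f(b), a − b⟩ / ‖a − b‖²`
(Lean's division by zero implements the `0/0 = 0` convention). -/
noncomputable def lEst {n : ℕ} (f' : En n → En n) (a b : En n) : ℝ :=
  ⟪f' a - f' b, a - b⟫ / ‖a - b‖ ^ 2

/-- Local (inverse) cocoercivity estimate `c = ‖∇f(a) − ∇f(b)‖² / ⟨∇f(a) − ∇f(b), a − b⟩`
(convention `0/0 = 0`). -/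
noncomputable def cEst {n : ℕ} (f' : En n → En n) (a b : En n) : ℝ :=
  ‖f' a - f' b‖ ^ 2 / ⟪f' a - f' b, a - b⟫

/-- `δ = γ ℓ (γ c − 1)`. -/
noncomputable def deltaEst {n : ℕ} (γ : ℝ) (f' : En n → En n) (a b : En n) : ℝ :=
  γ * lEst f' a b * (γ * cEst f' a b - 1)

/-- `g` is proper, lower semicontinuous and convex (extended-real-valued). -/
def ProperLscConvex {n : ℕ} (g : En n → EReal) : Prop :=
  (∀ x, g x ≠ ⊥) ∧ (∃ x, g x ≠ ⊤) ∧ LowerSemicontinuous g ∧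
    ∀ x y : En n, ∀ a b : ℝ, 0 ≤ a → 0 ≤ b → a + b = 1 →
      g (a • x + b • y) ≤ (a : EReal) * g x + (b : EReal) * g y

/-- `p = prox_{γ g}(u)`, characterized as minimality of `w ↦ g w + ‖w − u‖²/(2γ)`. -/
def IsProx {n : ℕ} (γ : ℝ) (g : En n → EReal) (u p : En n) : Prop :=
  ∀ w, g p + ((‖p - u‖ ^ 2 / (2 * γ) : ℝ) : EReal) ≤ g w + ((‖w - u‖ ^ 2 / (2 * γ) : ℝ) : EReal)

/-- Real value of `φ = f + g` (equals `f z + g z` whenever `g z` is finite). -/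
noncomputable def phiR {n : ℕ} (f : En n → ℝ) (g : En n → EReal) (z : En n) : ℝ :=
  f z + (g z).toReal

/-- `P = φ(z) − φ(x*)` (real-valued). -/
noncomputable def Pval {n : ℕ} (f : En n → ℝ) (g : En n → EReal) (xs z : En n) : ℝ :=
  phiR f g z - phiR f g xs

/-- adaPGM stepsize factor: `min{√(1+ρ), 1/(2√([δ]₊))}` with the convention `1/0 = +∞`
(so the second term is inactive when `[δ]₊ = 0`). -/
noncomputable def adaStep (ρ δ : ℝ) : ℝ :=
  if δ ≤ 0 then Real.sqrt (1 + ρ) else min (Real.sqrt (1 + ρ)) (1 / (2 * Real.sqrt δ))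

/-- Malitsky–Mishchenko stepsize: `min{γ√(1+γ/γ'), 1/(2L)}` with the convention `1/0 = +∞`. -/
noncomputable def mmStep (γprev γ L : ℝ) : ℝ :=
  if L = 0 then γ * Real.sqrt (1 + γ / γprev)
  else min (γ * Real.sqrt (1 + γ / γprev)) (1 / (2 * L))

/-- Lyapunov function `U_k = ½‖x^k − x*‖² + ¼‖x^k − x^{k-1}‖² + γ_k(1+ρ_k)P_{k-1}`,
with the Lean index shifted by one (Lean `x (k+1)` is the paper `x^k`). -/
noncomputable def Ufun {n : ℕ} (f : En n → ℝ) (g : En n → EReal) (xs : En n)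
    (x : ℕ → En n) (γ : ℕ → ℝ) (k : ℕ) : ℝ :=
  1/2 * ‖x (k+1) - xs‖ ^ 2 + 1/4 * ‖x (k+1) - x k‖ ^ 2
    + γ (k+1) * (1 + γ (k+1) / γ k) * Pval f g xs (x k)

-- gradient inequality
lemma grad_ineq {n : ℕ} {f : En n → ℝ} {f' : En n → En n}
    (hconv : ConvexOn ℝ Set.univ f) (hgrad : ∀ z, HasGradientAt f (f' z) z)
    (z w : En n) : f z + ⟪f' z, w - z⟫ ≤ f w := by
  rcases eq_or_ne w z with rfl | hne
  · simp
  have hline : ConvexOn ℝ Set.univ (f ∘ (AffineMap.lineMap z w : ℝ →ᵃ[ℝ] En n)) := by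
    have := hconv.comp_affineMap (AffineMap.lineMap z w : ℝ →ᵃ[ℝ] En n)
    simpa using this
  have hcurve : HasDerivAt (fun t : ℝ => (AffineMap.lineMap z w : ℝ →ᵃ[ℝ] En n) t) (w - z) 0 := by
    have h1 : HasDerivAt (fun t : ℝ => t • (w - z) + z) ((1:ℝ) • (w - z)) 0 :=
      ((hasDerivAt_id (0:ℝ)).smul_const (w - z)).add_const z
    simp only [one_smul] at h1
    have : (fun t : ℝ => (AffineMap.lineMap z w : ℝ →ᵃ[ℝ] En n) t) = fun t : ℝ => t • (w - z) + z := by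
      funext t; simp [AffineMap.lineMap_apply_module]; module
    rw [this]; exact h1
  have hgz : HasFDerivAt f (InnerProductSpace.toDual ℝ (En n) (f' z)) z :=
    hasGradientAt_iff_hasFDerivAt.1 (hgrad z)
  have hq : HasDerivAt (f ∘ (AffineMap.lineMap z w : ℝ →ᵃ[ℝ] En n)) ⟪f' z, w - z⟫ 0 := by
    have h0 : (AffineMap.lineMap z w : ℝ →ᵃ[ℝ] En n) 0 = z := AffineMap.lineMap_apply_zero z w
    have hgz' : HasFDerivAt f (InnerProductSpace.toDual ℝ (En n) (f' z))
        ((AffineMap.lineMap z w : ℝ →ᵃ[ℝ] En n) 0) := by rw [h0]; exact hgz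
    have h2 := hgz'.comp_hasDerivAt (0:ℝ) hcurve
    simpa [InnerProductSpace.toDual_apply_apply] using h2
  have hslope := hline.le_slope_of_hasDerivAt (Set.mem_univ (0:ℝ)) (Set.mem_univ 1) one_pos hq
  rw [slope_def_field] at hslope
  simp only [Function.comp_apply, AffineMap.lineMap_apply_one, AffineMap.lineMap_apply_zero] at hslope
  have : ⟪f' z, w - z⟫ ≤ f w - f z := by
    have h1 : ((1:ℝ) - 0) = 1 := by norm_num
    rw [h1, div_one] at hslope
    linarith
  linarith

-- if the monotonicity gap vanishes, gradients coincide
lemma grad_eq_of_inner_eq {n : ℕ} {f : En n → ℝ} {f' : En n → En n}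
    (hconv : ConvexOn ℝ Set.univ f) (hgrad : ∀ z, HasGradientAt f (f' z) z)
    {y z : En n} (h : ⟪f' y - f' z, y - z⟫ ≤ 0) : f' y = f' z := by
  have h1 := grad_ineq hconv hgrad z y
  have h2 := grad_ineq hconv hgrad y z
  have hinner : ⟪f' y, z - y⟫ = -⟪f' y, y - z⟫ := by
    rw [← inner_neg_right]; congr 1; abel
  have hsub : ⟪f' y - f' z, y - z⟫ = ⟪f' y, y - z⟫ - ⟪f' z, y - z⟫ := inner_sub_left _ _ _
  -- equality: f y = f z + ⟪f' z, y - z⟫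
  have heqv : f y = f z + ⟪f' z, y - z⟫ := by rw [hinner] at h2; linarith
  -- F w = f w - ⟪f' z, w⟫ has a global min at y
  set F : En n → ℝ := fun w => f w - ⟪f' z, w⟫ with hF
  have hFy : ∀ w, F y ≤ F w := by
    intro w
    have h3 := grad_ineq hconv hgrad z w
    have e1 : ⟪f' z, w - z⟫ = ⟪f' z, w⟫ - ⟪f' z, z⟫ := inner_sub_right _ _ _
    have e2 : ⟪f' z, y - z⟫ = ⟪f' z, y⟫ - ⟪f' z, z⟫ := inner_sub_right _ _ _
    simp only [hF]
    rw [e1] at h3; rw [e2] at heqv; linarith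
  have hmin : IsLocalMin F y := Filter.Eventually.of_forall hFy
  have hFd : HasFDerivAt F ((InnerProductSpace.toDual ℝ (En n) (f' y))
      - (InnerProductSpace.toDual ℝ (En n) (f' z))) y := by
    have ha : HasFDerivAt f (InnerProductSpace.toDual ℝ (En n) (f' y)) y :=
      hasGradientAt_iff_hasFDerivAt.1 (hgrad y)
    have hb : HasFDerivAt (fun w : En n => ⟪f' z, w⟫)
        (InnerProductSpace.toDual ℝ (En n) (f' z)) y :=
      (InnerProductSpace.toDual ℝ (En n) (f' z)).hasFDerivAt
    exact ha.sub hb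
  have hzero := hmin.hasFDerivAt_eq_zero hFd
  have happ : ⟪f' y - f' z, f' y - f' z⟫ = 0 := by
    have := congrArg (fun L => L (f' y - f' z)) hzero
    simp only [ContinuousLinearMap.sub_apply, InnerProductSpace.toDual_apply_apply,
      ContinuousLinearMap.zero_apply] at this
    rw [inner_sub_left]; linarith
  have : f' y - f' z = 0 := by
    have := inner_self_eq_zero.1 happ
    exact this
  exact sub_eq_zero.1 this

lemma prox_subgrad {n : ℕ} {g : En n → EReal} (hg : ProperLscConvex g) {γ : ℝ} (hγ : 0 < γ)
    {u p : En n} (hp : IsProx γ g u p) :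
    g p ≠ ⊤ ∧ ∀ w, g w ≠ ⊤ → γ * (g p).toReal + ⟪u - p, w - p⟫ ≤ γ * (g w).toReal := by
  obtain ⟨hbot, ⟨w0, hw0⟩, _, hgc⟩ := hg
  have hptop : g p ≠ ⊤ := by
    intro h
    have h2 := hp w0
    rw [h] at h2
    have h3 : g w0 + ((‖w0 - u‖ ^ 2 / (2 * γ) : ℝ) : EReal) = ⊤ :=
      top_le_iff.1 (le_trans (by simp [EReal.top_add_coe]) h2)
    have hgw0 : g w0 = (((g w0).toReal : ℝ) : EReal) := (EReal.coe_toReal hw0 (hbot w0)).symm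
    rw [hgw0, ← EReal.coe_add] at h3
    exact EReal.coe_ne_top _ h3
  refine ⟨hptop, ?_⟩
  intro w hw
  have hgp : g p = (((g p).toReal : ℝ) : EReal) := (EReal.coe_toReal hptop (hbot p)).symm
  have hgw : g w = (((g w).toReal : ℝ) : EReal) := (EReal.coe_toReal hw (hbot w)).symm
  set Gp := (g p).toReal with hGp
  set Gw := (g w).toReal with hGw
  have key : ∀ t : ℝ, 0 < t → t ≤ 1 →
      γ * Gp + ⟪u - p, w - p⟫ ≤ γ * Gw + t * (‖w - p‖ ^ 2 / 2) := by
    intro t ht ht1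
    have hcx := hgc p w (1 - t) t (by linarith) (by linarith) (by ring)
    set q := (1 - t) • p + t • w with hq
    have hgq_le : g q ≤ (((1 - t) * Gp + t * Gw : ℝ) : EReal) := by
      rw [hgp, hgw] at hcx
      have : ((1 - t : ℝ) : EReal) * ((Gp : ℝ) : EReal) + ((t : ℝ) : EReal) * ((Gw : ℝ) : EReal)
          = (((1 - t) * Gp + t * Gw : ℝ) : EReal) := by
        rw [← EReal.coe_mul, ← EReal.coe_mul, ← EReal.coe_add]
      rw [this] at hcx
      exact hcx
    have hq_ne_top : g q ≠ ⊤ := ne_top_of_le_ne_top (EReal.coe_ne_top _) hgq_le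
    have hgq : g q = (((g q).toReal : ℝ) : EReal) := (EReal.coe_toReal hq_ne_top (hbot q)).symm
    set Gq := (g q).toReal with hGq
    have hGq_le : Gq ≤ (1 - t) * Gp + t * Gw := by
      rw [hgq] at hgq_le; exact_mod_cast hgq_le
    have hmin := hp q
    rw [hgp, hgq] at hmin
    have hmin' : Gp + ‖p - u‖ ^ 2 / (2 * γ) ≤ Gq + ‖q - u‖ ^ 2 / (2 * γ) := by
      exact_mod_cast hmin
    have hvec : q - u = (p - u) + t • (w - p) := by
      rw [hq]; module
    have hnorm : ‖q - u‖ ^ 2 = ‖p - u‖ ^ 2 + 2 * t * ⟪p - u, w - p⟫ + t ^ 2 * ‖w - p‖ ^ 2 := by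
      rw [hvec, norm_add_sq_real, real_inner_smul_right, norm_smul, Real.norm_eq_abs,
        abs_of_pos ht, mul_pow]
      ring
    have h2γ : (0:ℝ) < 2 * γ := by linarith
    have hmin'' : Gp * (2 * γ) + ‖p - u‖ ^ 2 ≤ Gq * (2 * γ) + ‖q - u‖ ^ 2 := by
      have h := mul_le_mul_of_nonneg_right hmin' h2γ.le
      rw [add_mul, add_mul, div_mul_cancel₀ _ (ne_of_gt h2γ), div_mul_cancel₀ _ (ne_of_gt h2γ)] at h
      exact h
    have h4 : Gp * (2 * γ) ≤ ((1 - t) * Gp + t * Gw) * (2 * γ)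
        + 2 * t * ⟪p - u, w - p⟫ + t ^ 2 * ‖w - p‖ ^ 2 := by
      have h5 := mul_le_mul_of_nonneg_right hGq_le h2γ.le
      nlinarith [hmin'', hnorm]
    have h6 : t * (Gp * (2 * γ)) ≤ t * (Gw * (2 * γ) + 2 * ⟪p - u, w - p⟫ + t * ‖w - p‖ ^ 2) := by
      nlinarith [h4]
    have h7 : Gp * (2 * γ) ≤ Gw * (2 * γ) + 2 * ⟪p - u, w - p⟫ + t * ‖w - p‖ ^ 2 :=
      le_of_mul_le_mul_left h6 ht
    have hi : ⟪p - u, w - p⟫ = -⟪u - p, w - p⟫ := by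
      rw [← inner_neg_left]; congr 1; abel
    rw [hi] at h7
    linarith
  have hN : (0:ℝ) ≤ ‖w - p‖ ^ 2 / 2 := by positivity
  refine le_of_forall_pos_le_add ?_
  intro ε hε
  rcases eq_or_lt_of_le hN with h0 | h0
  · have h1 := key 1 one_pos le_rfl
    rw [← h0] at h1
    linarith
  · set t := min 1 (ε / (‖w - p‖ ^ 2 / 2)) with htdef
    have ht : 0 < t := lt_min one_pos (div_pos hε h0)
    have h1 := key t ht (min_le_left _ _)
    have h2 : t * (‖w - p‖ ^ 2 / 2) ≤ ε := by
      calc t * (‖w - p‖ ^ 2 / 2) ≤ (ε / (‖w - p‖ ^ 2 / 2)) * (‖w - p‖ ^ 2 / 2) :=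
            mul_le_mul_of_nonneg_right (min_le_right _ _) hN
        _ = ε := div_mul_cancel₀ _ (ne_of_gt h0)
    linarith

lemma adaStep_nonneg (ρ δ : ℝ) : 0 ≤ adaStep ρ δ := by
  unfold adaStep; split
  · exact Real.sqrt_nonneg _
  · exact le_min (Real.sqrt_nonneg _) (by positivity)

lemma adaStep_pos {ρ : ℝ} (δ : ℝ) (h : 0 < ρ) : 0 < adaStep ρ δ := by
  unfold adaStep; split
  · exact Real.sqrt_pos.2 (by linarith)
  · rename_i hδ
    push_neg at hδ
    refine lt_min (Real.sqrt_pos.2 (by linarith)) ?_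
    have : 0 < Real.sqrt δ := Real.sqrt_pos.2 hδ
    positivity

lemma adaStep_sq_le {ρ : ℝ} (δ : ℝ) (h : 0 ≤ ρ) : (adaStep ρ δ) ^ 2 ≤ 1 + ρ := by
  have h1 : adaStep ρ δ ≤ Real.sqrt (1 + ρ) := by
    unfold adaStep; split
    · exact le_rfl
    · exact min_le_left _ _
  calc (adaStep ρ δ) ^ 2 ≤ (Real.sqrt (1 + ρ)) ^ 2 :=
        pow_le_pow_left₀ (adaStep_nonneg ρ δ) h1 2
    _ = 1 + ρ := Real.sq_sqrt (by linarith)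

lemma adaStep_sq_mul_le {ρ δ : ℝ} (hδ : 0 < δ) : (adaStep ρ δ) ^ 2 * δ ≤ 1 / 4 := by
  have h1 : adaStep ρ δ ≤ 1 / (2 * Real.sqrt δ) := by
    unfold adaStep; rw [if_neg (not_le.2 hδ)]; exact min_le_right _ _
  have hs : (Real.sqrt δ) ^ 2 = δ := Real.sq_sqrt hδ.le
  have hsp : 0 < Real.sqrt δ := Real.sqrt_pos.2 hδ
  have h2 : (adaStep ρ δ) ^ 2 ≤ (1 / (2 * Real.sqrt δ)) ^ 2 :=
    pow_le_pow_left₀ (adaStep_nonneg ρ δ) h1 2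
  have h3 : (1 / (2 * Real.sqrt δ)) ^ 2 * δ = 1 / 4 := by
    rw [div_pow, one_pow, mul_pow, hs]
    field_simp
    ring
  calc (adaStep ρ δ) ^ 2 * δ ≤ (1 / (2 * Real.sqrt δ)) ^ 2 * δ :=
        mul_le_mul_of_nonneg_right h2 hδ.le
    _ = 1 / 4 := h3

set_option maxHeartbeats 2000000 in
/-- sufficient-descent inequality for adaPGM.
Indexing is shifted by one: Lean `x (k+1)`, `γ (k+1)` are the paper `x^k`, `γ_k`
(so `x 0 = x^{-1}` and `γ 0 = γ₋₁`). -/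
theorem adaPGM_sufficient_descent {n : ℕ}
    (f : En n → ℝ) (f' : En n → En n) (g : En n → EReal)
    (hconv : ConvexOn ℝ Set.univ f)
    (hgrad : ∀ z, HasGradientAt f (f' z) z)
    (hlip : LocallyLipschitz f')
    (hg : ProperLscConvex g)
    (hargmin : ∃ z, ∀ w, (f z : EReal) + g z ≤ (f w : EReal) + g w)
    (x : ℕ → En n) (γ : ℕ → ℝ)
    (hγ0 : 0 < γ 0) (hγ01 : γ 0 ≤ γ 1)
    (hstep : ∀ k, IsProx (γ (k+1)) g (x k - γ (k+1) • f' (x k)) (x (k+1)))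
    (hrule : ∀ k, γ (k+2)
      = γ (k+1) * adaStep (γ (k+1) / γ k) (deltaEst (γ (k+1)) f' (x k) (x (k+1))))
    (xs : En n) (hxs : ∀ w, (f xs : EReal) + g xs ≤ (f w : EReal) + g w)
    (k : ℕ) (hk : 1 ≤ k) :
    (Ufun f g xs x γ (k+1)
      ≤ Ufun f g xs x γ k
        - (1/4 - (γ (k+2) / γ (k+1)) ^ 2 * deltaEst (γ (k+1)) f' (x k) (x (k+1)))
            * ‖x k - x (k+1)‖ ^ 2
        - γ (k+1) * (1 + γ (k+1) / γ k - (γ (k+2) / γ (k+1)) ^ 2) * Pval f g xs (x k))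
    ∧ 0 ≤ 1/4 - (γ (k+2) / γ (k+1)) ^ 2 * deltaEst (γ (k+1)) f' (x k) (x (k+1))
    ∧ 0 ≤ 1 + γ (k+1) / γ k - (γ (k+2) / γ (k+1)) ^ 2 := by
  obtain ⟨m, rfl⟩ : ∃ m, k = m + 1 := ⟨k - 1, (Nat.succ_pred_eq_of_pos hk).symm⟩
  have hpair : ∀ j, 0 < γ j ∧ 0 < γ (j+1) := by
    intro j
    induction j with
    | zero => exact ⟨hγ0, lt_of_lt_of_le hγ0 hγ01⟩
    | succ i ih =>
      refine ⟨ih.2, ?_⟩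
      rw [hrule i]
      exact mul_pos ih.2 (adaStep_pos _ (div_pos ih.2 ih.1))
  have hγpos : ∀ j, 0 < γ j := fun j => (hpair j).1
  have hrule' : γ (m+3) = γ (m+2) * adaStep (γ (m+2) / γ (m+1))
      (deltaEst (γ (m+2)) f' (x (m+1)) (x (m+2))) := hrule (m+1)
  simp only [show m+1+1 = m+2 from rfl, show m+1+2 = m+3 from rfl]
  simp only [Ufun, Pval, phiR, show m+2+1 = m+3 from rfl, show m+1+1 = m+2 from rfl]
  set δ := deltaEst (γ (m+2)) f' (x (m+1)) (x (m+2)) with hδdef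
  set ρp := γ (m+3) / γ (m+2) with hρpdef
  have hρeq : ρp = adaStep (γ (m+2) / γ (m+1)) δ := by
    rw [hρpdef, hrule', mul_div_cancel_left₀ _ (ne_of_gt (hγpos (m+2)))]
  have hρp_nonneg : 0 ≤ ρp := hρeq ▸ adaStep_nonneg _ _
  have part2 : (0:ℝ) ≤ 1/4 - ρp^2 * δ := by
    rcases le_or_gt δ 0 with h | h
    · nlinarith [sq_nonneg ρp]
    · have h2 := adaStep_sq_mul_le (ρ := γ (m+2) / γ (m+1)) h
      rw [← hρeq] at h2
      linarith
  have part3 : (0:ℝ) ≤ 1 + γ (m+2) / γ (m+1) - ρp^2 := by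
    have h2 := adaStep_sq_le δ (le_of_lt (div_pos (hγpos (m+2)) (hγpos (m+1))))
    rw [← hρeq] at h2
    linarith
  refine ⟨?_, part2, part3⟩
  -- main descent inequality
  have hy_top : g (x (m+1)) ≠ ⊤ := (prox_subgrad hg (hγpos (m+1)) (hstep m)).1
  have hzf := prox_subgrad hg (hγpos (m+2)) (hstep (m+1))
  have hzpf := prox_subgrad hg (hγpos (m+3)) (hstep (m+2))
  have hxs_top : g xs ≠ ⊤ := by
    intro htop
    have h := hxs (x (m+1))
    rw [htop] at h
    rw [EReal.coe_add_top, top_le_iff] at h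
    have hgy : g (x (m+1)) = (((g (x (m+1))).toReal : ℝ) : EReal) :=
      (EReal.coe_toReal hy_top (hg.1 _)).symm
    rw [hgy, ← EReal.coe_add] at h
    exact EReal.coe_ne_top _ h
  have hE1 : γ (m+3) * (g (x (m+3))).toReal
      + ⟪(x (m+2) - γ (m+3) • f' (x (m+2))) - x (m+3), xs - x (m+3)⟫
      ≤ γ (m+3) * (g xs).toReal := hzpf.2 xs hxs_top
  have hE2 : γ (m+2) * (g (x (m+2))).toReal
      + ⟪(x (m+1) - γ (m+2) • f' (x (m+1))) - x (m+2), x (m+3) - x (m+2)⟫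
      ≤ γ (m+2) * (g (x (m+3))).toReal := hzf.2 (x (m+3)) hzpf.1
  have hE3 : γ (m+2) * (g (x (m+2))).toReal
      + ⟪(x (m+1) - γ (m+2) • f' (x (m+1))) - x (m+2), x (m+1) - x (m+2)⟫
      ≤ γ (m+2) * (g (x (m+1))).toReal := hzf.2 (x (m+1)) hy_top
  have hE4 : f (x (m+2)) + ⟪f' (x (m+2)), xs - x (m+2)⟫ ≤ f xs :=
    grad_ineq hconv hgrad (x (m+2)) xs
  have hE5 : f (x (m+2)) + ⟪f' (x (m+2)), x (m+1) - x (m+2)⟫ ≤ f (x (m+1)) :=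
    grad_ineq hconv hgrad (x (m+2)) (x (m+1))
  have hδD : δ * ‖x (m+1) - x (m+2)‖^2
      = (γ (m+2))^2 * ‖f' (x (m+1)) - f' (x (m+2))‖^2
        - γ (m+2) * ⟪f' (x (m+1)) - f' (x (m+2)), x (m+1) - x (m+2)⟫ := by
    rcases le_or_gt ⟪f' (x (m+1)) - f' (x (m+2)), x (m+1) - x (m+2)⟫ 0 with hle | hpos
    · have hfe := grad_eq_of_inner_eq hconv hgrad hle
      rw [hδdef]
      unfold deltaEst lEst cEst
      rw [hfe]
      simp
    · have hD : ‖x (m+1) - x (m+2)‖^2 ≠ 0 := by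
        intro h0
        have hd0 : x (m+1) - x (m+2) = 0 := by
          have := pow_eq_zero_iff (two_ne_zero (α := ℕ)) |>.1 h0
          exact norm_eq_zero.1 this
        rw [hd0] at hpos
        simp at hpos
      rw [hδdef]
      unfold deltaEst lEst cEst
      generalize hI : ⟪f' (x (m+1)) - f' (x (m+2)), x (m+1) - x (m+2)⟫ = I at hpos hD ⊢
      generalize hDD : ‖x (m+1) - x (m+2)‖^2 = D at hD ⊢
      generalize hNN : ‖f' (x (m+1)) - f' (x (m+2))‖^2 = N
      field_simp
  have hcs : -⟪(x (m+1) - x (m+2)) - γ (m+2) • (f' (x (m+1)) - f' (x (m+2))), x (m+3) - x (m+2)⟫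
      ≤ ‖(x (m+1) - x (m+2)) - γ (m+2) • (f' (x (m+1)) - f' (x (m+2)))‖
        * ‖x (m+3) - x (m+2)‖ := by
    have h := real_inner_le_norm
      (-((x (m+1) - x (m+2)) - γ (m+2) • (f' (x (m+1)) - f' (x (m+2)))))
      (x (m+3) - x (m+2))
    rwa [inner_neg_left, norm_neg] at h
  have hγ3 : γ (m+3) = ρp * γ (m+2) := by
    rw [hρpdef, div_mul_cancel₀ _ (ne_of_gt (hγpos (m+2)))]
  rw [hγ3] at hE1 ⊢
  have hE2s := mul_le_mul_of_nonneg_left hE2 hρp_nonneg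
  have hE4s := mul_le_mul_of_nonneg_left hE4 (mul_nonneg hρp_nonneg (hγpos (m+2)).le)
  have hE5s := mul_le_mul_of_nonneg_left hE5 (hγpos (m+2)).le
  have h35 := add_le_add hE3 hE5s
  have h35s := mul_le_mul_of_nonneg_left h35 (sq_nonneg ρp)
  have hyoung : ρp * -(⟪(x (m+1) - x (m+2)) - γ (m+2) • (f' (x (m+1)) - f' (x (m+2))),
        x (m+3) - x (m+2)⟫)
      ≤ 1/4 * ‖x (m+3) - x (m+2)‖^2
        + ρp^2 * ‖(x (m+1) - x (m+2)) - γ (m+2) • (f' (x (m+1)) - f' (x (m+2)))‖^2 := by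
    nlinarith [mul_le_mul_of_nonneg_left hcs hρp_nonneg,
      sq_nonneg (ρp * ‖(x (m+1) - x (m+2)) - γ (m+2) • (f' (x (m+1)) - f' (x (m+2)))‖
        - ‖x (m+3) - x (m+2)‖/2)]
  have hδD2 : ρp^2 * (δ * ‖x (m+1) - x (m+2)‖^2)
      = ρp^2 * ((γ (m+2))^2 * ‖f' (x (m+1)) - f' (x (m+2))‖^2
        - γ (m+2) * ⟪f' (x (m+1)) - f' (x (m+2)), x (m+1) - x (m+2)⟫) := by rw [hδD]
  simp only [inner_sub_left, inner_sub_right, real_inner_smul_left, real_inner_smul_right,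
    ← real_inner_self_eq_norm_sq] at hE1 hE2s hE4s h35s hyoung hδD2 ⊢
  simp only [real_inner_comm (x (m+2)) (x (m+1)), real_inner_comm (x (m+3)) (x (m+1)),
    real_inner_comm (x (m+3)) (x (m+2)), real_inner_comm xs (x (m+1)),
    real_inner_comm xs (x (m+2)), real_inner_comm xs (x (m+3)),
    real_inner_comm (f' (x (m+1))) (x (m+1)), real_inner_comm (f' (x (m+1))) (x (m+2)),
    real_inner_comm (f' (x (m+1))) (x (m+3)), real_inner_comm (f' (x (m+1))) xs,
    real_inner_comm (f' (x (m+2))) (x (m+1)), real_inner_comm (f' (x (m+2))) (x (m+2)),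
    real_inner_comm (f' (x (m+2))) (x (m+3)), real_inner_comm (f' (x (m+2))) xs,
    real_inner_comm (f' (x (m+2))) (f' (x (m+1)))] at hE1 hE2s hE4s h35s hyoung hδD2 ⊢
  linarith [hE1, hE4s, hE2s, h35s, hyoung, hδD2]
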